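/- Let I be an inverse sequence of abelian groups over ω that is injective in Ab^{ω^op}. Then each I_k is a divisible abelian group. -/
import Mathlib


universe u

/-- An inverse sequence of abelian groups `⟨I k, p k⟩` over `ω` is an injective object
in the category `Ab^{ω^op}` of inverse sequences of abelian groups: for every
levelwise-injective morphism `ψ : G → H` of inverse sequences and every morphism
`φ : G → I`, there is a morphism `φ̄ : H → I` with `φ̄ ∘ ψ = φ`. -/
def IsInjectiveSeq {I : ℕ → Type u} [∀ k, AddCommGroup (I k)]
    (p : ∀ k, I (k + 1) →+ I k) : Prop :=
  ∀ (G H : ℕ → Type u) (_ : ∀ k, AddCommGroup (G k)) (_ : ∀ k, AddCommGroup (H k))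
    (q : ∀ k, G (k + 1) →+ G k) (r : ∀ k, H (k + 1) →+ H k)
    (ψ : ∀ k, G k →+ H k) (φ : ∀ k, G k →+ I k),
    (∀ k, (r k).comp (ψ (k + 1)) = (ψ k).comp (q k)) →
    (∀ k, (p k).comp (φ (k + 1)) = (φ k).comp (q k)) →
    (∀ k, Function.Injective (ψ k)) →
    ∃ φb : ∀ k, H k →+ I k,
      (∀ k, (p k).comp (φb (k + 1)) = (φb k).comp (r k)) ∧
      (∀ k, (φb k).comp (ψ k) = φ k)

/-- Composite transition map `I b →+ I a` for `a ≤ b`. -/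
def transMap {I : ℕ → Type u} [∀ k, AddCommGroup (I k)]
    (p : ∀ k, I (k + 1) →+ I k) : ∀ {a b : ℕ}, a ≤ b → (I b →+ I a) :=
  fun {a b} h =>
    Nat.leRec (motive := fun m _ => I m →+ I a) (AddMonoidHom.id _)
      (fun n _ ih => ih.comp (p n)) h

lemma transMap_refl {I : ℕ → Type u} [∀ k, AddCommGroup (I k)]
    (p : ∀ k, I (k + 1) →+ I k) (a : ℕ) (h : a ≤ a) :
    transMap p h = AddMonoidHom.id _ := by
  simp [transMap]

lemma transMap_succ {I : ℕ → Type u} [∀ k, AddCommGroup (I k)]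
    (p : ∀ k, I (k + 1) →+ I k) {a b : ℕ} (h : a ≤ b + 1) (h' : a ≤ b) :
    transMap p h = (transMap p h').comp (p b) := by
  rw [transMap, Nat.leRec_succ _ _ h']
  rfl

lemma p_comp_transMap {I : ℕ → Type u} [∀ k, AddCommGroup (I k)]
    (p : ∀ k, I (k + 1) →+ I k) {a b : ℕ} (h : a + 1 ≤ b) :
    (p a).comp (transMap p h) = transMap p (Nat.le_of_succ_le h) := by
  induction b, h using Nat.le_induction with
  | base =>
      rw [transMap_refl, transMap_succ p _ (le_refl a), transMap_refl]
      ext z; simp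
  | succ n hn ih =>
      rw [transMap_succ p (Nat.le_succ_of_le hn) hn,
        transMap_succ p (Nat.le_of_succ_le (Nat.le_succ_of_le hn)) (Nat.le_of_succ_le hn),
        ← AddMonoidHom.comp_assoc, ih]

/-- If an inverse sequence of abelian groups is an injective object in `Ab^{ω^op}`,
then each of its groups is divisible. -/
theorem divisible_of_injectiveSeq
    {I : ℕ → Type u} [∀ k, AddCommGroup (I k)] (p : ∀ k, I (k + 1) →+ I k)
    (hinj : IsInjectiveSeq p) :
    ∀ k (x : I k) (d : ℕ), 0 < d → ∃ y : I k, d • y = x := by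
  intro k x d hd
  set Z : ℕ → Type u := fun _ => ULift.{u} ℤ with hZ
  let q : ∀ j, Z (j + 1) →+ Z j := fun j => if j < k then AddMonoidHom.id _ else 0
  let e : ℤ →+ ULift.{u} ℤ := (AddEquiv.ulift (α := ℤ)).symm.toAddMonoidHom
  let e' : ULift.{u} ℤ →+ ℤ := (AddEquiv.ulift (α := ℤ)).toAddMonoidHom
  let ψ : ∀ j, Z j →+ Z j := fun _ => (e.comp ((zmultiplesHom ℤ (d : ℤ)).comp e'))
  let φ : ∀ j, Z j →+ I j := fun j =>
    if h : j ≤ k then ((zmultiplesHom (I j) ((transMap p h) x)).comp e') else 0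
  obtain ⟨φb, hcomm, hext⟩ := hinj Z Z inferInstance inferInstance q q ψ φ
    (by
      intro j
      by_cases h : j < k <;> ext n <;> simp [q, ψ, h, e, e'])
    (by
      intro j
      by_cases h : j + 1 ≤ k
      · have h1 : j ≤ k := le_of_lt h
        ext n
        simp only [AddMonoidHom.comp_apply, φ, dif_pos h, dif_pos h1, q, if_pos (show j < k from h),
          AddMonoidHom.id_apply, zmultiplesHom_apply]
        rw [map_zsmul]
        congr 1
        have := congrArg (fun f => f x) (p_comp_transMap p h)
        simpa using this
      · by_cases h1 : j ≤ k
        · ext n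
          simp [φ, q, h, show ¬ j < k by omega, dif_pos h1]
        · ext n
          simp [φ, q, h, show ¬ j ≤ k by omega, show ¬ j < k by omega])
    (by
      intro j a b hab
      simp only [ψ, AddMonoidHom.comp_apply] at hab
      have h2 := (AddEquiv.ulift (α := ℤ)).symm.injective hab
      simp only [zmultiplesHom_apply, smul_eq_mul] at h2
      have h3 : e' a = e' b := mul_right_cancel₀ (by exact_mod_cast hd.ne') h2
      exact (AddEquiv.ulift (α := ℤ)).injective h3)
  have key := congrArg (fun f => f (e 1)) (hext k)
  simp only [AddMonoidHom.comp_apply, φ, dif_pos (le_refl k), transMap_refl,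
    zmultiplesHom_apply, ψ] at key
  refine ⟨φb k (e 1), ?_⟩
  have h1 : e' (e 1) = 1 := rfl
  rw [h1, one_smul, AddMonoidHom.id_apply] at key
  have : e ((d : ℤ) ) = (d : ℕ) • e 1 := by
    rw [← map_nsmul]; congr 1; simp
  rw [this, map_nsmul] at key
  simpa using key
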